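/- Suppose there exists an integer i ≥ 1 with s(i) = 0, and let i₀ be the least such integer. Let v ≥ 0 be an integer and let k₀ be the least integer ≥ (v+1)/(i₀+1). Then ( Σ_{m=0}^∞ a⁰(p^{m+v})·p^{−m} ) / ( Σ_{m=0}^∞ a⁰(p^m)·p^{−m} ) = ( 1 + p + p² + ⋯ + p^{i₀} − p^{v − (k₀−1)(i₀+1)} ) / ( p + p² + ⋯ + p^{i₀} ); in particular both series converge and the denominator series is positive. -/

import Mathlib

lemma tsum_ind_mod (x : ℝ) (hx0 : 0 ≤ x) (hx1 : x < 1) (q t : ℕ) (ht : t < q) :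
    Summable (fun m : ℕ => (if m % q = t then x ^ m else 0)) ∧
    ∑' m : ℕ, (if m % q = t then x ^ m else (0:ℝ)) = x ^ t * (1 - x ^ q)⁻¹ := by
  have hq : 0 < q := by omega
  have hsum0 : Summable (fun m : ℕ => x ^ m) := summable_geometric_of_lt_one hx0 hx1
  have hsum : Summable (fun m : ℕ => (if m % q = t then x ^ m else (0:ℝ))) := by
    refine Summable.of_nonneg_of_le (fun m => ?_) (fun m => ?_) hsum0
    · split
      · positivity
      · exact le_rfl
    · split
      · exact le_rfl
      · positivity
  refine ⟨hsum, ?_⟩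
  have hinj : Function.Injective (fun k : ℕ => q * k + t) := by
    intro k1 k2 h
    simp only [] at h
    exact Nat.eq_of_mul_eq_mul_left hq (by omega)
  have hsupp : Function.support (fun m : ℕ => (if m % q = t then x ^ m else (0:ℝ)))
      ⊆ Set.range (fun k : ℕ => q * k + t) := by
    intro m hm
    simp only [Function.mem_support, ne_eq, ite_eq_right_iff, not_forall] at hm
    obtain ⟨hmq, -⟩ := hm
    refine ⟨m / q, ?_⟩
    show q * (m / q) + t = m
    have := Nat.div_add_mod m q; omega
  rw [← hinj.tsum_eq hsupp]
  have hxq1 : x ^ q < 1 := pow_lt_one₀ hx0 hx1 (by omega)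
  have hxq0 : (0:ℝ) ≤ x ^ q := by positivity
  calc ∑' k : ℕ, (if (q * k + t) % q = t then x ^ (q * k + t) else (0:ℝ))
      = ∑' k : ℕ, (x ^ q) ^ k * x ^ t := by
        apply tsum_congr; intro k
        rw [if_pos (by rw [Nat.mul_add_mod]; exact Nat.mod_eq_of_lt ht), pow_add, pow_mul]
    _ = x ^ t * (1 - x ^ q)⁻¹ := by
        rw [tsum_mul_right, tsum_geometric_of_lt_one hxq0 hxq1, mul_comm]

lemma tsum_mod (x : ℝ) (hx0 : 0 ≤ x) (hx1 : x < 1) (q t : ℕ) (ht : t < q) :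
    Summable (fun m : ℕ => (if m % q = t then (0:ℝ) else 1) * x ^ m) ∧
    ∑' m : ℕ, (if m % q = t then (0:ℝ) else 1) * x ^ m
      = (1 - x)⁻¹ - x ^ t * (1 - x ^ q)⁻¹ := by
  have hsum0 : Summable (fun m : ℕ => x ^ m) := summable_geometric_of_lt_one hx0 hx1
  obtain ⟨hs1, he1⟩ := tsum_ind_mod x hx0 hx1 q t ht
  have hfun : (fun m : ℕ => (if m % q = t then (0:ℝ) else 1) * x ^ m)
      = fun m : ℕ => x ^ m - (if m % q = t then x ^ m else 0) := by
    funext m; split <;> ring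
  constructor
  · rw [hfun]; exact hsum0.sub hs1
  · rw [hfun, Summable.tsum_sub hsum0 hs1, tsum_geometric_of_lt_one hx0 hx1, he1]

lemma zero_iff_mod (p : ℕ) (hp : p.Prime) (a : ℤ) (s : ℕ → ℤ)
    (hs0 : s 0 = 1) (hs1 : s 1 = a)
    (hrec : ∀ m : ℕ, s (m + 2) = a * s (m + 1) - (p : ℤ) * s m)
    (i₀ : ℕ) (hi₀ : IsLeast {i : ℕ | 1 ≤ i ∧ s i = 0} i₀) :
    ∀ m : ℕ, s m = 0 ↔ m % (i₀ + 1) = i₀ := by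
  obtain ⟨⟨hi1, hiz⟩, hmin⟩ := hi₀
  -- multiplication identity
  have key : ∀ m n : ℕ, s (m + n + 2) = s (m + 1) * s (n + 1) - (p : ℤ) * s m * s n := by
    intro m
    induction m with
    | zero => intro n; have := hrec n; simpa [hs0, hs1, add_comm, mul_assoc] using this
    | succ m ih =>
      intro n
      have h1 : m + 1 + n + 2 = m + (n + 1) + 2 := by omega
      rw [h1, ih (n + 1), hrec n, hrec m]
      ring
  set c : ℤ := s (i₀ + 1) with hc
  have hshift : ∀ n : ℕ, s (n + (i₀ + 1)) = c * s n := by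
    intro n
    cases n with
    | zero => simp [hs0, hc]
    | succ m =>
      have h1 : m + 1 + (i₀ + 1) = i₀ + m + 2 := by omega
      rw [h1, key i₀ m, hiz]
      ring
  have hcne : c ≠ 0 := by
    obtain ⟨j, rfl⟩ : ∃ j, i₀ = j + 1 := ⟨i₀ - 1, by omega⟩
    have : c = -(p : ℤ) * s j := by rw [hc, hrec j, hiz]; ring
    rw [this]
    have hpne : (p : ℤ) ≠ 0 := by exact_mod_cast hp.ne_zero
    have hsj : s j ≠ 0 := by
      rcases Nat.eq_zero_or_pos j with rfl | hj
      · simp [hs0]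
      · intro h0
        have := hmin ⟨hj, h0⟩
        omega
    exact mul_ne_zero (by simpa using hpne) hsj
  -- s n = 0 ↔ s (n % (i₀+1)) = 0
  have hmodiff : ∀ n : ℕ, (s n = 0 ↔ s (n % (i₀ + 1)) = 0) := by
    intro n
    induction n using Nat.strong_induction_on with
    | _ n ih =>
      rcases lt_or_ge n (i₀ + 1) with h | h
      · rw [Nat.mod_eq_of_lt h]
      · have h1 : n = (n - (i₀ + 1)) + (i₀ + 1) := by omega
        have h2 : n % (i₀ + 1) = (n - (i₀ + 1)) % (i₀ + 1) := by
          conv_lhs => rw [h1]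
          rw [Nat.add_mod_right]
        rw [h2, ← ih (n - (i₀ + 1)) (by omega)]
        constructor
        · intro h0
          have := hshift (n - (i₀ + 1))
          rw [← h1, h0] at this
          exact (mul_eq_zero.mp this.symm).resolve_left hcne
        · intro h0
          have := hshift (n - (i₀ + 1))
          rw [← h1, h0, mul_zero] at this
          exact this
  intro m
  rw [hmodiff m]
  have hlt : m % (i₀ + 1) < i₀ + 1 := Nat.mod_lt _ (by omega)
  constructor
  · intro h0
    by_contra hne
    have hlt' : m % (i₀ + 1) < i₀ := by omega
    rcases Nat.eq_zero_or_pos (m % (i₀ + 1)) with hz | hpos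
    · rw [hz, hs0] at h0; exact one_ne_zero h0
    · have := hmin ⟨hpos, h0⟩; omega
  · intro h; rw [h]; exact hiz

lemma final_alg (P : ℝ) (hP : 1 < P) (i₀ t w : ℕ) (htw : t + w = i₀) (hi : 1 ≤ i₀) :
    ((1 - P⁻¹)⁻¹ - (P⁻¹) ^ t * (1 - (P⁻¹) ^ (i₀ + 1))⁻¹) /
      ((1 - P⁻¹)⁻¹ - (P⁻¹) ^ i₀ * (1 - (P⁻¹) ^ (i₀ + 1))⁻¹)
      = ((∑ j ∈ Finset.range (i₀ + 1), P ^ j) - P ^ w) /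
        (∑ j ∈ Finset.Icc 1 i₀, P ^ j) := by
  have hP0 : 0 < P := lt_trans one_pos hP
  have hPne : P ≠ 0 := ne_of_gt hP0
  have hP1 : P ≠ 1 := ne_of_gt hP
  have hP1' : P - 1 ≠ 0 := sub_ne_zero.mpr (ne_of_gt hP)
  have hx0 : 0 < P⁻¹ := by positivity
  have hx1 : P⁻¹ < 1 := by rw [inv_lt_one_iff₀]; right; exact hP
  have hq1 : (1:ℝ) < P ^ (i₀ + 1) := one_lt_pow₀ hP (by omega)
  have hq1' : P ^ (i₀ + 1) - 1 ≠ 0 := sub_ne_zero.mpr (ne_of_gt hq1)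
  have i1 : (1 - P⁻¹)⁻¹ = P / (P - 1) := by
    rw [show (1 : ℝ) - P⁻¹ = (P - 1) / P by field_simp, inv_div]
  have i2 : (1 - (P⁻¹) ^ (i₀ + 1))⁻¹ = P ^ (i₀ + 1) / (P ^ (i₀ + 1) - 1) := by
    rw [inv_pow, show (1 : ℝ) - (P ^ (i₀ + 1))⁻¹ = (P ^ (i₀ + 1) - 1) / P ^ (i₀ + 1) by
      field_simp, inv_div]
  have hS : ∑ j ∈ Finset.range (i₀ + 1), P ^ j = (P ^ (i₀ + 1) - 1) / (P - 1) :=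
    geom_sum_eq hP1 _
  set E : ℝ := (P⁻¹) ^ i₀ * (P ^ (i₀ + 1) / (P ^ (i₀ + 1) - 1)) with hE
  have hEne : E ≠ 0 := by
    rw [hE]
    have : (0:ℝ) < P ^ (i₀ + 1) - 1 := by linarith
    positivity
  have key : ∀ u r : ℕ, u + r = i₀ →
      (1 - P⁻¹)⁻¹ - (P⁻¹) ^ u * (1 - (P⁻¹) ^ (i₀ + 1))⁻¹
        = ((∑ j ∈ Finset.range (i₀ + 1), P ^ j) - P ^ r) * E := by
    intro u r hur
    have hu : P ^ u ≠ 0 := by positivity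
    have hr : P ^ r ≠ 0 := by positivity
    have e1 : P ^ i₀ = P ^ u * P ^ r := by rw [← pow_add, hur]
    have e2 : P ^ (i₀ + 1) = P ^ u * P ^ r * P := by rw [pow_succ, e1]
    have hq1'' : P ^ u * P ^ r * P - 1 ≠ 0 := by rw [← e2]; exact hq1'
    rw [i1, i2, hS, hE, inv_pow, inv_pow, e1, e2]
    rw [eq_comm, sub_mul, sub_eq_iff_eq_add]
    field_simp
    ring
  have hTS : (∑ j ∈ Finset.range (i₀ + 1), P ^ j) - P ^ 0
      = ∑ j ∈ Finset.Icc 1 i₀, P ^ j := by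
    rw [Finset.sum_range_succ' (fun j => P ^ j) i₀, ← Finset.Ico_add_one_right_eq_Icc,
      Finset.sum_Ico_eq_sum_range]
    simp [add_comm]
  rw [key t w htw, key i₀ 0 (by omega), mul_div_mul_right _ _ hEne, hTS]

/-- Let `i₀` be the least integer `i ≥ 1` with `s i = 0`, let `v ≥ 0` and let
`k₀` be the least integer `≥ (v+1)/(i₀+1)`.  Then
`(Σ_{m=0}^∞ a⁰(p^{m+v}) p^{-m}) / (Σ_{m=0}^∞ a⁰(p^m) p^{-m})
  = (1 + p + ⋯ + p^{i₀} - p^{v-(k₀-1)(i₀+1)}) / (p + ⋯ + p^{i₀})`;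
in particular both series converge and the denominator series is positive.
Here `a⁰(p^m)` is `1` if `s m ≠ 0` and `0` if `s m = 0`, where `s` is the
sequence `s 0 = 1`, `s 1 = a`, `s (m+2) = a * s (m+1) - p * s m`. -/
theorem stmt_5 (p : ℕ) (hp : p.Prime) (a : ℤ) (s : ℕ → ℤ)
    (hs0 : s 0 = 1) (hs1 : s 1 = a)
    (hrec : ∀ m : ℕ, s (m + 2) = a * s (m + 1) - (p : ℤ) * s m)
    (i₀ : ℕ) (hi₀ : IsLeast {i : ℕ | 1 ≤ i ∧ s i = 0} i₀)
    (v : ℕ) (k₀ : ℕ)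
    (hk₀ : IsLeast {k : ℕ | ((v : ℝ) + 1) / ((i₀ : ℝ) + 1) ≤ (k : ℝ)} k₀) :
    Summable (fun m : ℕ => (if s (m + v) = 0 then (0 : ℝ) else 1) / (p : ℝ) ^ m) ∧
    Summable (fun m : ℕ => (if s m = 0 then (0 : ℝ) else 1) / (p : ℝ) ^ m) ∧
    0 < ∑' m : ℕ, (if s m = 0 then (0 : ℝ) else 1) / (p : ℝ) ^ m ∧
    (∑' m : ℕ, (if s (m + v) = 0 then (0 : ℝ) else 1) / (p : ℝ) ^ m) /
        (∑' m : ℕ, (if s m = 0 then (0 : ℝ) else 1) / (p : ℝ) ^ m) =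
      ((∑ j ∈ Finset.range (i₀ + 1), (p : ℝ) ^ j) -
          (p : ℝ) ^ ((v : ℤ) - ((k₀ : ℤ) - 1) * ((i₀ : ℤ) + 1))) /
        (∑ j ∈ Finset.Icc 1 i₀, (p : ℝ) ^ j) := by
  have hzero := zero_iff_mod p hp a s hs0 hs1 hrec i₀ hi₀
  have hi1 : 1 ≤ i₀ := hi₀.1.1
  have hp2 : 2 ≤ p := hp.two_le
  have hP1 : (1 : ℝ) < (p : ℝ) := by exact_mod_cast hp.one_lt
  have hP0 : (0 : ℝ) < (p : ℝ) := lt_trans one_pos hP1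
  have hx0 : (0 : ℝ) ≤ ((p : ℝ))⁻¹ := by positivity
  have hx1 : ((p : ℝ))⁻¹ < 1 := by rw [inv_lt_one_iff₀]; right; exact hP1
  set q : ℕ := i₀ + 1 with hq_def
  have hq0 : 0 < q := by omega
  set w : ℕ := v % q with hw_def
  have hwlt : w < q := Nat.mod_lt _ hq0
  set t : ℕ := i₀ - w with ht_def
  have htw : t + w = i₀ := by omega
  have htlt : t < q := by omega
  -- rewrite the two functions
  have hfunD : (fun m : ℕ => (if s m = 0 then (0 : ℝ) else 1) / (p : ℝ) ^ m)
      = fun m : ℕ => (if m % q = i₀ then (0 : ℝ) else 1) * ((p : ℝ))⁻¹ ^ m := by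
    funext m
    rw [div_eq_mul_inv, ← inv_pow]
    congr 1
    simp only [hzero m]
  have hmodiff : ∀ m : ℕ, ((m + v) % q = i₀ ↔ m % q = t) := by
    intro m
    have h1 : (m + v) % q = (m % q + v % q) % q := by rw [Nat.add_mod]
    have hr : m % q < q := Nat.mod_lt _ hq0
    rcases lt_or_ge (m % q + v % q) q with h | h
    · rw [h1, Nat.mod_eq_of_lt h]; omega
    · rw [h1, Nat.mod_eq_sub_mod h, Nat.mod_eq_of_lt (by omega)]; omega
  have hfunN : (fun m : ℕ => (if s (m + v) = 0 then (0 : ℝ) else 1) / (p : ℝ) ^ m)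
      = fun m : ℕ => (if m % q = t then (0 : ℝ) else 1) * ((p : ℝ))⁻¹ ^ m := by
    funext m
    rw [div_eq_mul_inv, ← inv_pow]
    congr 1
    simp only [hzero (m + v), hmodiff m]
  obtain ⟨hsumN, htsumN⟩ := tsum_mod ((p : ℝ))⁻¹ hx0 hx1 q t htlt
  obtain ⟨hsumD, htsumD⟩ := tsum_mod ((p : ℝ))⁻¹ hx0 hx1 q i₀ (by omega)
  rw [hfunD, hfunN]
  refine ⟨hsumN, hsumD, ?_, ?_⟩
  · -- positivity of the denominator series
    refine Summable.tsum_pos hsumD (fun m => ?_) 0 ?_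
    · apply mul_nonneg _ (by positivity)
      split <;> norm_num
    · have h0 : ¬ (0 % q = i₀) := by simp; omega
      rw [if_neg h0, pow_zero, mul_one]
      norm_num
  · -- the exponent equals w
    have hk : k₀ = v / q + 1 := by
      obtain ⟨hmem, hlb⟩ := hk₀
      have hq' : (0 : ℝ) < (i₀ : ℝ) + 1 := by positivity
      have hub : k₀ ≤ v / q + 1 := by
        apply hlb
        show ((v : ℝ) + 1) / ((i₀ : ℝ) + 1) ≤ ((v / q + 1 : ℕ) : ℝ)
        rw [div_le_iff₀ hq']
        have hnat : v + 1 ≤ (v / q + 1) * q := by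
          have h2 : (v / q + 1) * q = q * (v / q) + q := by ring
          have h3 := Nat.div_add_mod v q
          omega
        calc ((v : ℝ) + 1) = ((v + 1 : ℕ) : ℝ) := by push_cast; ring
          _ ≤ (((v / q + 1) * q : ℕ) : ℝ) := by exact_mod_cast hnat
          _ = ((v / q + 1 : ℕ) : ℝ) * ((i₀ : ℝ) + 1) := by push_cast [hq_def]; ring
      have hlbk : v / q + 1 ≤ k₀ := by
        have h1 : ((v : ℝ) + 1) ≤ (k₀ : ℝ) * ((i₀ : ℝ) + 1) := by
          rw [← div_le_iff₀ hq']; exact hmem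
        have h2 : v + 1 ≤ k₀ * q := by
          have : ((v + 1 : ℕ) : ℝ) ≤ ((k₀ * q : ℕ) : ℝ) := by push_cast [hq_def]; push_cast at h1 ⊢; linarith
          exact_mod_cast this
        have h3 : v / q < k₀ := (Nat.div_lt_iff_lt_mul hq0).mpr (by omega)
        omega
      omega
    have hexp : (v : ℤ) - ((k₀ : ℤ) - 1) * ((i₀ : ℤ) + 1) = (w : ℤ) := by
      rw [hk]
      simp only [hq_def, hw_def]
      have hn := Nat.div_add_mod v (i₀ + 1)
      set M : ℕ := v / (i₀ + 1) with hM
      have hnz : ((i₀ : ℤ) + 1) * (M : ℤ) + ((v % (i₀ + 1) : ℕ) : ℤ) = (v : ℤ) := by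
        exact_mod_cast hn
      push_cast at hnz ⊢
      linear_combination (-1 : ℤ) * hnz
    rw [htsumN, htsumD, hexp, zpow_natCast]
    exact final_alg (p : ℝ) hP1 i₀ t w htw hi1
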